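/- Let 0 < r < 1 and 0 < p < 1 with 2p − r > 1, and suppose a_{m,t} ≥ m^{-r} for all m and all 1 ≤ t ≤ m. Then the null and alternative hypotheses merge asymptotically: TV(P0_m, P1_m) → 0 as m → ∞; consequently, for every sequence of measurable rejection regions A_m ⊆ [0,1]^m, the sum of the type I error P0_m(A_m) and the type II error P1_m([0,1]^m \ A_m) tends to 1 as m → ∞. (Theorem 3.1, impossibility of detection.) -/

import Mathlib

open MeasureTheory Filter

/-- The uniform distribution on `[0, a]` (for `a > 0`). -/
noncomputable def unif (a : ℝ) : Measure ℝ :=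
  (ENNReal.ofReal a)⁻¹ • volume.restrict (Set.Icc 0 a)

/-- The mixture `(1 - ε)·U[0,1] + ε·U[0,a]`. -/
noncomputable def mix (ε a : ℝ) : Measure ℝ :=
  ENNReal.ofReal (1 - ε) • unif 1 + ENNReal.ofReal ε • unif a

/-- The null law `P0_m`: `m` i.i.d. uniform-`[0,1]` coordinates. -/
noncomputable def nullLaw (m : ℕ) : Measure (Fin m → ℝ) :=
  Measure.pi fun _ => unif 1

/-- The alternative law `P1_m`: independent coordinates, the `t`-th distributed as
`(1 - ε)·U[0,1] + ε·U[0, a t]`. -/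
noncomputable def altLaw (m : ℕ) (ε : ℝ) (a : Fin m → ℝ) : Measure (Fin m → ℝ) :=
  Measure.pi fun t => mix ε (a t)

/-- Total variation distance `sup_A |μ(A) - ν(A)|` over measurable sets. -/
noncomputable def TV {α : Type*} [MeasurableSpace α] (μ ν : Measure α) : ℝ :=
  ⨆ A : {s : Set α // MeasurableSet s}, |(μ A).toReal - (ν A).toReal|


open scoped ENNReal
open Set

lemma lintegral_pi_prod {n : ℕ} (μ : Measure ℝ) [SigmaFinite μ] (f : Fin n → ℝ → ℝ≥0∞)
    (hf : ∀ i, Measurable (f i)) :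
    ∫⁻ x : Fin n → ℝ, ∏ i, f i (x i) ∂(Measure.pi fun _ => μ) = ∏ i, ∫⁻ x, f i x ∂μ := by
  induction n with
  | zero => simp
  | succ n ih =>
    have h := (measurePreserving_piFinSuccAbove (fun _ : Fin (n+1) => μ) 0).symm
    rw [← h.lintegral_comp_emb (MeasurableEquiv.measurableEmbedding _)]
    simp only [MeasurableEquiv.piFinSuccAbove_symm_apply, Fin.insertNthEquiv, Equiv.coe_fn_mk,
      Fin.prod_univ_succ, Fin.insertNth_zero, Fin.cons_zero, Fin.cons_succ, Fin.zero_succAbove,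
      cast_eq]
    rw [lintegral_prod_mul (f := fun y => f 0 y)
      (g := fun y : Fin n → ℝ => ∏ j : Fin n, f j.succ (y j)) (hf 0).aemeasurable
      ((Finset.measurable_prod Finset.univ
        (fun j _ => (hf j.succ).comp (measurable_pi_apply j))).aemeasurable)]
    rw [ih (fun j => f j.succ) (fun j => hf j.succ)]

lemma integral_pi_prod {n : ℕ} (μ : Measure ℝ) [SigmaFinite μ] (f : Fin n → ℝ → ℝ) :
    ∫ x : Fin n → ℝ, ∏ i, f i (x i) ∂(Measure.pi fun _ => μ) = ∏ i, ∫ x, f i x ∂μ := by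
  induction n with
  | zero => simp [Measure.real, Measure.pi_univ]
  | succ n ih =>
    have h := (measurePreserving_piFinSuccAbove (fun _ : Fin (n+1) => μ) 0).symm
    rw [← h.integral_comp']
    simp only [MeasurableEquiv.piFinSuccAbove_symm_apply, Fin.insertNthEquiv, Equiv.coe_fn_mk,
      Fin.prod_univ_succ, Fin.insertNth_zero, Fin.cons_zero, Fin.cons_succ, Fin.zero_succAbove,
      cast_eq]
    rw [integral_prod_mul (f := fun y => f 0 y)
      (g := fun y : Fin n → ℝ => ∏ j : Fin n, f j.succ (y j))]
    rw [ih (fun j => f j.succ)]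

lemma pi_withDensity {n : ℕ} (μ : Measure ℝ) [SigmaFinite μ] (f : Fin n → ℝ → ℝ≥0∞)
    (hf : ∀ i, Measurable (f i)) [∀ i : Fin n, SigmaFinite (μ.withDensity (f i))] :
    Measure.pi (fun i => μ.withDensity (f i)) =
      (Measure.pi fun _ : Fin n => μ).withDensity (fun x => ∏ i, f i (x i)) := by
  refine Measure.pi_eq (μ := fun i : Fin n => μ.withDensity (f i)) fun s hs => ?_
  rw [withDensity_apply _ (MeasurableSet.univ_pi hs),
    ← lintegral_indicator (MeasurableSet.univ_pi hs)]
  have hpt : ∀ x : Fin n → ℝ, (Set.univ.pi s).indicator (fun x => ∏ i, f i (x i)) x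
      = ∏ i, (s i).indicator (f i) (x i) := by
    intro x
    by_cases hx : x ∈ Set.univ.pi s
    · rw [Set.indicator_of_mem hx]
      exact Finset.prod_congr rfl fun i _ =>
        (Set.indicator_of_mem (hx i (Set.mem_univ i)) _).symm
    · rw [Set.indicator_of_notMem hx]
      symm
      rw [Set.mem_univ_pi] at hx
      push_neg at hx
      obtain ⟨i, hi⟩ := hx
      exact Finset.prod_eq_zero (Finset.mem_univ i) (Set.indicator_of_notMem hi _)
  rw [lintegral_congr hpt,
    lintegral_pi_prod μ _ (fun i => (hf i).indicator (hs i))]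
  exact Finset.prod_congr rfl fun i _ => by
    rw [lintegral_indicator (hs i), withDensity_apply _ (hs i)]

lemma unif_one : unif 1 = volume.restrict (Set.Icc 0 1) := by
  simp [unif]

instance : IsProbabilityMeasure (unif 1) := by
  constructor
  rw [unif_one, Measure.restrict_apply_univ, Real.volume_Icc]
  norm_num

noncomputable def gd (ε a : ℝ) : ℝ → ℝ≥0∞ := fun s =>
  ENNReal.ofReal (1 - ε) + (Set.Icc 0 a).indicator (fun _ => ENNReal.ofReal (ε / a)) s

lemma gd_measurable (ε a : ℝ) : Measurable (gd ε a) :=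
  Measurable.add (f := fun _ => ENNReal.ofReal (1 - ε))
    (g := (Set.Icc 0 a).indicator fun _ => ENNReal.ofReal (ε / a))
    measurable_const (measurable_const.indicator measurableSet_Icc)

lemma mix_eq (ε a : ℝ) (hε0 : 0 ≤ ε) (ha0 : 0 < a) (ha1 : a ≤ 1) :
    mix ε a = (unif 1).withDensity (gd ε a) := by
  have : gd ε a = (fun _ => ENNReal.ofReal (1 - ε))
      + (Set.Icc 0 a).indicator (fun _ => ENNReal.ofReal (ε / a)) := rfl
  rw [this, withDensity_add_left measurable_const, withDensity_const,
    withDensity_indicator measurableSet_Icc, withDensity_const]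
  have hres : (unif 1).restrict (Set.Icc 0 a) = volume.restrict (Set.Icc 0 a) := by
    rw [unif_one, Measure.restrict_restrict measurableSet_Icc,
      Set.inter_eq_left.mpr (Set.Icc_subset_Icc le_rfl ha1)]
  rw [hres]
  unfold mix unif
  congr 1
  rw [smul_smul, ENNReal.ofReal_div_of_pos ha0, ENNReal.div_eq_inv_mul, mul_comm]

noncomputable def gre (ε a : ℝ) : ℝ → ℝ := fun s =>
  (1 - ε) + (Set.Icc 0 a).indicator (fun _ => ε / a) s

lemma gre_measurable (ε a : ℝ) : Measurable (gre ε a) :=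
  measurable_const.add (measurable_const.indicator measurableSet_Icc)

lemma gre_nonneg (ε a : ℝ) (hε0 : 0 ≤ ε) (hε1 : ε ≤ 1) (ha0 : 0 < a) (x : ℝ) :
    0 ≤ gre ε a x := by
  have : (0:ℝ) ≤ ε / a := div_nonneg hε0 ha0.le
  unfold gre
  by_cases hx : x ∈ Set.Icc 0 a <;> simp [hx] <;> nlinarith

lemma gre_le (ε a : ℝ) (hε0 : 0 ≤ ε) (ha0 : 0 < a) (x : ℝ) :
    gre ε a x ≤ (1 - ε) + ε / a := by
  have : (0:ℝ) ≤ ε / a := div_nonneg hε0 ha0.le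
  unfold gre
  by_cases hx : x ∈ Set.Icc 0 a <;> simp [hx] <;> nlinarith

lemma gd_eq_ofReal (ε a : ℝ) (hε0 : 0 ≤ ε) (hε1 : ε ≤ 1) (ha0 : 0 < a) (x : ℝ) :
    gd ε a x = ENNReal.ofReal (gre ε a x) := by
  have h1 : (0:ℝ) ≤ 1 - ε := by linarith
  have h2 : (0:ℝ) ≤ ε / a := div_nonneg hε0 ha0.le
  unfold gd gre
  by_cases hx : x ∈ Set.Icc 0 a <;> simp [hx, ENNReal.ofReal_add h1 h2]

lemma unif_one_Icc (a : ℝ) (ha0 : 0 ≤ a) (ha1 : a ≤ 1) :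
    unif 1 (Set.Icc 0 a) = ENNReal.ofReal a := by
  rw [unif_one, Measure.restrict_apply measurableSet_Icc,
    Set.inter_eq_left.mpr (Set.Icc_subset_Icc le_rfl ha1), Real.volume_Icc, sub_zero]

lemma integrable_gre (ε a : ℝ) : Integrable (gre ε a) (unif 1) := by
  refine (integrable_const _).add ?_
  exact (integrable_const (ε / a)).indicator measurableSet_Icc

lemma integral_indicator_const' (a c : ℝ) (ha0 : 0 ≤ a) (ha1 : a ≤ 1) :
    ∫ x, (Set.Icc 0 a).indicator (fun _ => c) x ∂(unif 1) = a * c := by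
  rw [integral_indicator_const c measurableSet_Icc, measureReal_def, unif_one_Icc a ha0 ha1,
    ENNReal.toReal_ofReal ha0, smul_eq_mul]

lemma integral_gre (ε a : ℝ) (ha0 : 0 < a) (ha1 : a ≤ 1) :
    ∫ x, gre ε a x ∂(unif 1) = 1 := by
  unfold gre
  rw [integral_add (integrable_const _)
    ((integrable_const (ε / a)).indicator measurableSet_Icc),
    integral_const, integral_indicator_const' a _ ha0.le ha1]
  simp only [probReal_univ, smul_eq_mul, one_mul]
  field_simp
  ring

lemma integral_gre_sq (ε a : ℝ) (ha0 : 0 < a) (ha1 : a ≤ 1) :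
    ∫ x, (gre ε a x) ^ 2 ∂(unif 1) = 1 - ε ^ 2 + ε ^ 2 / a := by
  have hpt : (fun x => (gre ε a x) ^ 2) = fun x =>
      (1 - ε) ^ 2 + (Set.Icc 0 a).indicator
        (fun _ => (ε / a) ^ 2 + 2 * (1 - ε) * (ε / a)) x := by
    funext x
    unfold gre
    by_cases hx : x ∈ Set.Icc 0 a <;> simp [hx] <;> ring
  rw [hpt, integral_add (integrable_const _)
    ((integrable_const _).indicator measurableSet_Icc),
    integral_const, integral_indicator_const' a _ ha0.le ha1]
  simp only [probReal_univ, smul_eq_mul, one_mul]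
  field_simp
  ring

lemma isProb_unif (a : ℝ) (ha0 : 0 < a) : IsProbabilityMeasure (unif a) := by
  constructor
  unfold unif
  rw [Measure.smul_apply, Measure.restrict_apply_univ, Real.volume_Icc, sub_zero,
    smul_eq_mul, ENNReal.inv_mul_cancel (by simpa using ha0) ENNReal.ofReal_ne_top]

lemma isProb_mix (ε a : ℝ) (hε0 : 0 ≤ ε) (hε1 : ε ≤ 1) (ha0 : 0 < a) :
    IsProbabilityMeasure (mix ε a) := by
  haveI := isProb_unif a ha0
  constructor
  unfold mix
  rw [Measure.add_apply, Measure.smul_apply, Measure.smul_apply, measure_univ, measure_univ,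
    smul_eq_mul, smul_eq_mul, mul_one, mul_one, ← ENNReal.ofReal_add (by linarith) hε0]
  norm_num

lemma key (m : ℕ) {ε : ℝ} (hε0 : 0 ≤ ε) (hε1 : ε ≤ 1) (aa : Fin m → ℝ)
    (ha0 : ∀ t, 0 < aa t) (ha1 : ∀ t, aa t ≤ 1) {c : ℝ} (hc : ∀ t, ε ^ 2 / aa t ≤ c)
    (hc0 : 0 ≤ c) {A : Set (Fin m → ℝ)} (hA : MeasurableSet A) :
    |(nullLaw m A).toReal - (altLaw m ε aa A).toReal|
      ≤ Real.sqrt (Real.exp (m * c) - 1) := by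
  classical
  set P0 := nullLaw m with hP0def
  haveI : IsProbabilityMeasure P0 := by
    unfold P0; unfold nullLaw; infer_instance
  haveI hprob1 : ∀ t, IsProbabilityMeasure (mix ε (aa t)) :=
    fun t => isProb_mix ε (aa t) hε0 hε1 (ha0 t)
  haveI : IsProbabilityMeasure (altLaw m ε aa) := by
    unfold altLaw; infer_instance
  -- the density
  set G : (Fin m → ℝ) → ℝ := fun x => ∏ t, gre ε (aa t) (x t) with hGdef
  have hGmeas : Measurable G :=
    Finset.measurable_prod _ fun t _ => (gre_measurable _ _).comp (measurable_pi_apply t)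
  have hGnn : ∀ x, 0 ≤ G x := fun x =>
    Finset.prod_nonneg fun t _ => gre_nonneg _ _ hε0 hε1 (ha0 t) _
  set C : ℝ := ∏ t, ((1 - ε) + ε / aa t) with hCdef
  have hGle : ∀ x, G x ≤ C := fun x =>
    Finset.prod_le_prod (fun t _ => gre_nonneg _ _ hε0 hε1 (ha0 t) _)
      (fun t _ => gre_le _ _ hε0 (ha0 t) _)
  have hGint : Integrable G P0 := by
    refine (integrable_const C).mono' hGmeas.aestronglyMeasurable ?_
    filter_upwards with x
    rw [Real.norm_eq_abs, abs_of_nonneg (hGnn x)]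
    exact hGle x
  have hG2int : Integrable (fun x => G x ^ 2) P0 := by
    refine (integrable_const (C ^ 2)).mono'
      (hGmeas.pow_const 2).aestronglyMeasurable ?_
    filter_upwards with x
    rw [Real.norm_eq_abs, abs_of_nonneg (sq_nonneg _)]
    exact pow_le_pow_left₀ (hGnn x) (hGle x) 2
  -- identify P1 as withDensity
  have hP1 : altLaw m ε aa = P0.withDensity fun x => ENNReal.ofReal (G x) := by
    unfold altLaw
    have h1 : ∀ t, mix ε (aa t) = (unif 1).withDensity (gd ε (aa t)) :=
      fun t => mix_eq ε (aa t) hε0 (ha0 t) (ha1 t)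
    haveI hsf : ∀ t : Fin m, SigmaFinite ((unif 1).withDensity (gd ε (aa t))) := by
      intro t
      rw [← h1 t]
      haveI := hprob1 t
      infer_instance
    calc Measure.pi (fun t => mix ε (aa t))
        = Measure.pi (fun t => (unif 1).withDensity (gd ε (aa t))) := by
          congr 1; funext t; exact h1 t
      _ = (Measure.pi fun _ : Fin m => unif 1).withDensity
            (fun x => ∏ t, gd ε (aa t) (x t)) :=
          pi_withDensity (unif 1) _ (fun t => gd_measurable _ _)
      _ = P0.withDensity fun x => ENNReal.ofReal (G x) := by
          congr 1
          funext x
          rw [hGdef, ENNReal.ofReal_prod_of_nonneg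
            (fun t _ => gre_nonneg _ _ hε0 hε1 (ha0 t) _)]
          exact Finset.prod_congr rfl fun t _ =>
            gd_eq_ofReal ε (aa t) hε0 hε1 (ha0 t) _
  -- express measures as integrals
  have hP1A : ((altLaw m ε aa) A).toReal = ∫ x in A, G x ∂P0 := by
    rw [hP1, withDensity_apply _ hA,
      ← ofReal_integral_eq_lintegral_ofReal (hGint.restrict)
        (Filter.Eventually.of_forall hGnn),
      ENNReal.toReal_ofReal (integral_nonneg hGnn)]
  have hP0A : (P0 A).toReal = ∫ x in A, (1 : ℝ) ∂P0 := by
    rw [integral_const, smul_eq_mul, mul_one, measureReal_def, Measure.restrict_apply_univ]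
  -- difference as an integral
  have hdiff : (P0 A).toReal - ((altLaw m ε aa) A).toReal
      = ∫ x in A, (1 - G x) ∂P0 := by
    rw [hP0A, hP1A, ← integral_sub (integrable_const 1) hGint.restrict]
  -- bound |∫_A (1-G)| by ∫ |1-G|
  have habs : |∫ x in A, (1 - G x) ∂P0| ≤ ∫ x, |1 - G x| ∂P0 := by
    have h1 : |∫ x in A, (1 - G x) ∂P0| ≤ ∫ x in A, |1 - G x| ∂P0 := by
      rw [← Real.norm_eq_abs (∫ x in A, (1 - G x) ∂P0)]
      refine le_trans (norm_integral_le_integral_norm _) ?_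
      simp [Real.norm_eq_abs]
    exact h1.trans (setIntegral_le_integral (s := A)
      ((integrable_const 1).sub hGint).abs
      (Filter.Eventually.of_forall fun x => abs_nonneg _))
  have hC0 : 0 ≤ C := Finset.prod_nonneg fun t _ => by
    have := div_nonneg hε0 (ha0 t).le
    nlinarith
  -- Cauchy-Schwarz
  have hCS : ∫ x, |1 - G x| ∂P0 ≤ Real.sqrt (∫ x, (1 - G x) ^ 2 ∂P0) := by
    have hpq : Real.HolderConjugate 2 2 := Real.HolderConjugate.two_two
    have hf2 : MemLp (fun x => |1 - G x|) (ENNReal.ofReal 2) P0 := by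
      refine MemLp.of_bound
        ((hGmeas.const_sub 1).abs).aestronglyMeasurable (1 + C) ?_
      filter_upwards with x
      rw [Real.norm_eq_abs, abs_abs, abs_le]
      constructor
      · have := hGle x; linarith
      · have := hGnn x; linarith
    have hg2 : MemLp (fun _ : Fin m → ℝ => (1 : ℝ)) (ENNReal.ofReal 2) P0 := memLp_const 1
    have hH := integral_mul_le_Lp_mul_Lq_of_nonneg hpq
      (Filter.Eventually.of_forall fun x => abs_nonneg (1 - G x))
      (Filter.Eventually.of_forall fun _ => zero_le_one) hf2 hg2
    simp only [mul_one, Real.one_rpow, integral_const, probReal_univ,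
      one_smul, smul_eq_mul] at hH
    have heq : ∫ x, |1 - G x| ^ (2 : ℝ) ∂P0 = ∫ x, (1 - G x) ^ 2 ∂P0 := by
      refine integral_congr_ae (Filter.Eventually.of_forall fun x => ?_)
      show |1 - G x| ^ (2 : ℝ) = (1 - G x) ^ 2
      rw [Real.rpow_two, sq_abs]
    rw [heq] at hH
    rw [Real.sqrt_eq_rpow]
    exact hH
  -- compute the integrals
  have hintG : ∫ x, G x ∂P0 = 1 := by
    rw [show (∫ x, G x ∂P0)
        = ∫ x : Fin m → ℝ, ∏ t, gre ε (aa t) (x t) ∂(Measure.pi fun _ => unif 1) from rfl,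
      integral_pi_prod (unif 1) (fun t y => gre ε (aa t) y)]
    exact Finset.prod_eq_one fun t _ => integral_gre ε (aa t) (ha0 t) (ha1 t)
  have hintG2 : ∫ x, G x ^ 2 ∂P0 = ∏ t, (1 - ε ^ 2 + ε ^ 2 / aa t) := by
    have hpt : (∫ x, G x ^ 2 ∂P0)
        = ∫ x : Fin m → ℝ, ∏ t, (gre ε (aa t) (x t)) ^ 2 ∂(Measure.pi fun _ => unif 1) := by
      refine integral_congr_ae (Filter.Eventually.of_forall fun x => ?_)
      show G x ^ 2 = ∏ t, (gre ε (aa t) (x t)) ^ 2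
      rw [hGdef, ← Finset.prod_pow]
    rw [hpt, integral_pi_prod (unif 1) (fun t y => gre ε (aa t) y ^ 2)]
    exact Finset.prod_congr rfl fun t _ => integral_gre_sq ε (aa t) (ha0 t) (ha1 t)
  have h2 : ∫ x, (1 - G x) ^ 2 ∂P0 = (∏ t, (1 - ε ^ 2 + ε ^ 2 / aa t)) - 1 := by
    have hpt : (fun x => (1 - G x) ^ 2)
        = fun x => (1 : ℝ) - (2 * G x - G x ^ 2) := by
      funext x; ring
    have hsub : Integrable (fun x => 2 * G x - G x ^ 2) P0 :=
      (hGint.const_mul 2).sub hG2int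
    rw [hpt, integral_sub (integrable_const 1) hsub,
      integral_sub (hGint.const_mul 2) hG2int, MeasureTheory.integral_const_mul, hintG, hintG2,
      integral_const]
    simp only [probReal_univ, one_smul, smul_eq_mul]
    ring
  have hprodle : ∏ t, (1 - ε ^ 2 + ε ^ 2 / aa t) ≤ Real.exp (m * c) := by
    have hε2 : ε ^ 2 ≤ 1 := by nlinarith
    calc ∏ t, (1 - ε ^ 2 + ε ^ 2 / aa t) ≤ ∏ _t : Fin m, (1 + c) := by
          refine Finset.prod_le_prod (fun t _ => ?_) (fun t _ => ?_)
          · have := div_nonneg (sq_nonneg ε) (ha0 t).le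
            linarith
          · have := hc t
            have := sq_nonneg ε
            linarith
      _ = (1 + c) ^ m := by
          rw [Finset.prod_const, Finset.card_univ, Fintype.card_fin]
      _ ≤ Real.exp c ^ m := by
          refine pow_le_pow_left₀ (by linarith) ?_ m
          have := Real.add_one_le_exp c
          linarith
      _ = Real.exp (m * c) := (Real.exp_nat_mul c m).symm
  calc |(P0 A).toReal - ((altLaw m ε aa) A).toReal|
      = |∫ x in A, (1 - G x) ∂P0| := by rw [hdiff]
    _ ≤ ∫ x, |1 - G x| ∂P0 := habs
    _ ≤ Real.sqrt (∫ x, (1 - G x) ^ 2 ∂P0) := hCS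
    _ ≤ Real.sqrt (Real.exp (m * c) - 1) := by
        refine Real.sqrt_le_sqrt ?_
        rw [h2]
        linarith

set_option maxHeartbeats 2000000 in
/-- **Theorem 3.1 (impossibility of detection).** Let `0 < r, p < 1` with `2p - r > 1`,
`ε_m = m^{-p}`, and `a m t ∈ (0,1]` with `a m t ≥ m^{-r}` for all `m ≥ 2`, `1 ≤ t ≤ m`.
Then `TV(P0_m, P1_m) → 0` as `m → ∞`; consequently, for every sequence of measurable
rejection regions `A m`, the sum of the type I error `P0_m(A m)` and the type II error
`P1_m((A m)ᶜ)` tends to `1`. -/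
theorem impossibility_of_detection (r p : ℝ) (hr0 : 0 < r) (hr1 : r < 1)
    (hp0 : 0 < p) (hp1 : p < 1) (hpr : 2 * p - r > 1)
    (a : (m : ℕ) → Fin m → ℝ)
    (ha0 : ∀ m, 2 ≤ m → ∀ t, 0 < a m t) (ha1 : ∀ m, 2 ≤ m → ∀ t, a m t ≤ 1)
    (har : ∀ m : ℕ, 2 ≤ m → ∀ t, (m : ℝ) ^ (-r) ≤ a m t) :
    Tendsto (fun m => TV (nullLaw m) (altLaw m ((m : ℝ) ^ (-p)) (a m))) atTop (nhds 0)
    ∧ ∀ A : (m : ℕ) → Set (Fin m → ℝ), (∀ m, MeasurableSet (A m)) →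
        Tendsto
          (fun m => (nullLaw m (A m)).toReal
            + (altLaw m ((m : ℝ) ^ (-p)) (a m) (A m)ᶜ).toReal)
          atTop (nhds 1) := by
  
  classical
  set B : ℕ → ℝ := fun m => Real.sqrt (Real.exp ((m : ℝ) ^ (-(2 * p - r - 1))) - 1)
    with hBdef
  have key2 : ∀ m : ℕ, 2 ≤ m → ∀ A : Set (Fin m → ℝ), MeasurableSet A →
      |(nullLaw m A).toReal - (altLaw m ((m : ℝ) ^ (-p)) (a m) A).toReal| ≤ B m := by
    intro m hm A hA
    have hm2 : (2 : ℝ) ≤ (m : ℝ) := by exact_mod_cast hm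
    have hm0 : (0 : ℝ) < (m : ℝ) := by linarith
    have hm1 : (1 : ℝ) ≤ (m : ℝ) := by linarith
    set ε := (m : ℝ) ^ (-p) with hεdef
    have hε0 : 0 ≤ ε := Real.rpow_nonneg hm0.le _
    have hε1 : ε ≤ 1 := Real.rpow_le_one_of_one_le_of_nonpos hm1 (by linarith)
    set c := (m : ℝ) ^ (r - 2 * p) with hcdef
    have hc0 : 0 ≤ c := Real.rpow_nonneg hm0.le _
    have hε2 : ε ^ 2 = (m : ℝ) ^ (-(2 * p)) := by
      rw [hεdef, ← Real.rpow_two, ← Real.rpow_mul hm0.le]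
      ring_nf
    have hc : ∀ t, ε ^ 2 / a m t ≤ c := by
      intro t
      have hat : 0 < a m t := ha0 m hm t
      rw [div_le_iff₀ hat]
      have h1 : ε ^ 2 = c * (m : ℝ) ^ (-r) := by
        rw [hε2, hcdef, ← Real.rpow_add hm0]
        ring_nf
      rw [h1]
      exact mul_le_mul_of_nonneg_left (har m hm t) hc0
    have h := key m hε0 hε1 (a m) (ha0 m hm) (ha1 m hm) hc hc0 hA
    have hmc : (m : ℝ) * c = (m : ℝ) ^ (-(2 * p - r - 1)) := by
      nth_rewrite 1 [← Real.rpow_one (m : ℝ)]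
      rw [hcdef, ← Real.rpow_add hm0]
      ring_nf
    rw [hmc] at h
    exact h
  have hB0 : Tendsto B atTop (nhds 0) := by
    have h1 : Tendsto (fun m : ℕ => (m : ℝ) ^ (-(2 * p - r - 1))) atTop (nhds 0) :=
      (tendsto_rpow_neg_atTop (by linarith)).comp tendsto_natCast_atTop_atTop
    have h2 : Continuous fun y : ℝ => Real.sqrt (Real.exp y - 1) :=
      Real.continuous_sqrt.comp (Real.continuous_exp.sub continuous_const)
    have h3 : Tendsto B atTop (nhds (Real.sqrt (Real.exp 0 - 1))) := (h2.tendsto 0).comp h1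
    simpa using h3
  have hBnn : ∀ m, 0 ≤ B m := fun m => Real.sqrt_nonneg _
  constructor
  · refine tendsto_of_tendsto_of_tendsto_of_le_of_le'
      (tendsto_const_nhds : Tendsto (fun _ : ℕ => (0:ℝ)) atTop (nhds 0)) hB0 ?_ ?_
    · filter_upwards with m
      exact Real.iSup_nonneg fun A => abs_nonneg _
    · filter_upwards [eventually_ge_atTop 2] with m hm
      haveI : Nonempty {s : Set (Fin m → ℝ) // MeasurableSet s} :=
        ⟨⟨∅, MeasurableSet.empty⟩⟩
      exact ciSup_le fun A => key2 m hm A.1 A.2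
  · intro A hA
    have hsum : ∀ m : ℕ, 2 ≤ m →
        (nullLaw m (A m)).toReal + (altLaw m ((m : ℝ) ^ (-p)) (a m) (A m)ᶜ).toReal
          = 1 + ((nullLaw m (A m)).toReal
              - (altLaw m ((m : ℝ) ^ (-p)) (a m) (A m)).toReal) := by
      intro m hm
      have hm2 : (2 : ℝ) ≤ (m : ℝ) := by exact_mod_cast hm
      have hm0 : (0 : ℝ) < (m : ℝ) := by linarith
      haveI : ∀ t : Fin m, IsProbabilityMeasure (mix ((m : ℝ) ^ (-p)) (a m t)) :=
        fun t => isProb_mix _ _ (Real.rpow_nonneg hm0.le _)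
          (Real.rpow_le_one_of_one_le_of_nonpos (by linarith) (by linarith)) (ha0 m hm t)
      haveI : IsProbabilityMeasure (altLaw m ((m : ℝ) ^ (-p)) (a m)) := by
        unfold altLaw; infer_instance
      have hcompl : (altLaw m ((m : ℝ) ^ (-p)) (a m) (A m)ᶜ).toReal
          = 1 - (altLaw m ((m : ℝ) ^ (-p)) (a m) (A m)).toReal := by
        rw [measure_compl (hA m) (measure_ne_top _ _), measure_univ,
          ENNReal.toReal_sub_of_le prob_le_one ENNReal.one_ne_top, ENNReal.toReal_one]
      rw [hcompl]
      ring
    refine tendsto_of_tendsto_of_tendsto_of_le_of_le'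
      (g := fun m => 1 - B m) (h := fun m => 1 + B m) ?_ ?_ ?_ ?_
    · have h : Tendsto (fun m : ℕ => (1:ℝ) - B m) atTop (nhds (1 - 0)) :=
        tendsto_const_nhds.sub hB0
      simpa using h
    · have h : Tendsto (fun m : ℕ => (1:ℝ) + B m) atTop (nhds (1 + 0)) :=
        tendsto_const_nhds.add hB0
      simpa using h
    · filter_upwards [eventually_ge_atTop 2] with m hm
      rw [hsum m hm]
      have := key2 m hm (A m) (hA m)
      have h1 := abs_le.mp this
      linarith [h1.1]
    · filter_upwards [eventually_ge_atTop 2] with m hm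
      rw [hsum m hm]
      have := key2 m hm (A m) (hA m)
      have h1 := abs_le.mp this
      linarith [h1.2]
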